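/- Let 𝓛₀₁ be the set of all Borel probability measures on ℝ with mean 0 and variance 1, let α∈(0,1), and let μ₀∈𝓛₀₁. Then the relative measure of model risk for VaR_α at μ₀ over 𝓛₀₁ satisfies RM(μ₀,𝓛₀₁) = (√((1-α)/α) − VaR_α(μ₀)) / (√((1-α)/α) + √(α/(1-α))) = (1-α) − √(α(1-α))·VaR_α(μ₀). -/

import Mathlib

open MeasureTheory Set

/-- The set of all Borel probability measures on ℝ with mean 0 and variance 1. -/
def stdMeasures : Set (Measure ℝ) :=
  {μ | IsProbabilityMeasure μ ∧ (∫ x, x ∂μ) = 0 ∧ (∫ x, x ^ 2 ∂μ) = 1}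

/-- The distribution function of a measure: `F_μ(x) = μ((-∞, x])`. -/
noncomputable def distFun (μ : Measure ℝ) (x : ℝ) : ℝ := (μ (Iic x)).toReal

/-- The lower quantile of order `α`: `q_α(μ) = inf {x : F_μ(x) ≥ α}`. -/
noncomputable def lowerQuantile (μ : Measure ℝ) (α : ℝ) : ℝ :=
  sInf {x : ℝ | α ≤ distFun μ x}

/-- The Value-at-Risk of order `α`: `VaR_α(μ) = -q_α(μ)`. -/
noncomputable def VaR (μ : Measure ℝ) (α : ℝ) : ℝ := - lowerQuantile μ α

lemma std_integrable_sq {μ : Measure ℝ} (h : μ ∈ stdMeasures) :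
    Integrable (fun x : ℝ => x ^ 2) μ := by
  by_contra hc
  have := integral_undef hc
  rw [h.2.2] at this
  norm_num at this

lemma std_integrable_id {μ : Measure ℝ} (h : μ ∈ stdMeasures) :
    Integrable (fun x : ℝ => x) μ := by
  have : IsProbabilityMeasure μ := h.1
  have hg : Integrable (fun x : ℝ => 1 + x ^ 2) μ := by
    simpa using (integrable_const (1:ℝ)).add (std_integrable_sq h)
  refine Integrable.mono' hg measurable_id.aestronglyMeasurable ?_
  filter_upwards with x
  rw [Real.norm_eq_abs]
  nlinarith [abs_nonneg x, sq_abs x, sq_nonneg (|x| - 1)]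

lemma std_integrable_csq {μ : Measure ℝ} (h : μ ∈ stdMeasures) (c : ℝ) :
    Integrable (fun x : ℝ => (c - x) ^ 2) μ := by
  have : IsProbabilityMeasure μ := h.1
  have h1 : (fun x : ℝ => (c - x) ^ 2) = fun x : ℝ => (c^2 : ℝ) + ((-(2*c)) * x + x^2) := by
    funext x; ring
  rw [h1]
  exact (integrable_const _).add (((std_integrable_id h).const_mul _).add (std_integrable_sq h))

lemma std_integral_csq {μ : Measure ℝ} (h : μ ∈ stdMeasures) (c : ℝ) :
    ∫ x, (c - x) ^ 2 ∂μ = c ^ 2 + 1 := by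
  have : IsProbabilityMeasure μ := h.1
  have h1 : (fun x : ℝ => (c - x) ^ 2) = fun x : ℝ => (c^2 : ℝ) + ((-(2*c)) * x + x^2) := by
    funext x; ring
  have hi1 : Integrable (fun x : ℝ => -(2*c) * x) μ := (std_integrable_id h).const_mul _
  have hi2 : Integrable (fun x : ℝ => -(2*c) * x + x ^ 2) μ := by
    exact hi1.add (std_integrable_sq h)
  rw [h1, integral_add (integrable_const _) hi2, integral_add hi1 (std_integrable_sq h),
    MeasureTheory.integral_const_mul, h.2.1, h.2.2, integral_const]
  simp

lemma std_tail_bound {μ : Measure ℝ} (hμ : μ ∈ stdMeasures) (c K : ℝ) (hK : 0 < K)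
    (s : Set ℝ) (hs : MeasurableSet s) (h : ∀ y ∈ s, K ≤ (c - y) ^ 2) :
    (μ s).toReal ≤ (c ^ 2 + 1) / K := by
  have : IsProbabilityMeasure μ := hμ.1
  have hi := std_integrable_csq hμ c
  have h1 : K * (μ s).toReal ≤ ∫ x in s, (c - x) ^ 2 ∂μ :=
    setIntegral_ge_of_const_le_real hs (measure_ne_top μ s) h hi.integrableOn
  have h2 : ∫ x in s, (c - x) ^ 2 ∂μ ≤ ∫ x, (c - x) ^ 2 ∂μ :=
    setIntegral_le_integral hi (Filter.Eventually.of_forall fun x => sq_nonneg _)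
  rw [std_integral_csq hμ c] at h2
  rw [le_div_iff₀ hK]
  linarith

lemma cantelli_left {μ : Measure ℝ} (hμ : μ ∈ stdMeasures) {x : ℝ} (hx : x < 0) :
    distFun μ x ≤ 1 / (1 + x ^ 2) := by
  have hx0 : x ≠ 0 := ne_of_lt hx
  have hxt : x * x⁻¹ = 1 := mul_inv_cancel₀ hx0
  have hK : (0:ℝ) < (x + x⁻¹) ^ 2 := by
    have h1 : x⁻¹ < 0 := inv_neg''.mpr hx
    nlinarith
  have hb := std_tail_bound hμ (-x⁻¹) ((x + x⁻¹) ^ 2) hK (Iic x) measurableSet_Iic ?_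
  · have heq : ((-x⁻¹) ^ 2 + 1) / (x + x⁻¹) ^ 2 = 1 / (1 + x ^ 2) := by
      have h1 : (1:ℝ) + x ^ 2 > 0 := by positivity
      rw [div_eq_div_iff hK.ne' h1.ne']
      field_simp
      ring
    rw [heq] at hb
    exact hb
  · intro y hy
    simp only [mem_Iic] at hy
    have h1 : -x⁻¹ - y ≥ -x⁻¹ - x := by linarith
    have h2 : (0:ℝ) < -x⁻¹ - x := by
      have : x⁻¹ < 0 := inv_neg''.mpr hx
      nlinarith
    nlinarith

lemma cantelli_right {μ : Measure ℝ} (hμ : μ ∈ stdMeasures) {x : ℝ} (hx : 0 < x) :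
    1 - 1 / (1 + x ^ 2) ≤ distFun μ x := by
  have : IsProbabilityMeasure μ := hμ.1
  have hx0 : x ≠ 0 := ne_of_gt hx
  have hxt : x * x⁻¹ = 1 := mul_inv_cancel₀ hx0
  have hK : (0:ℝ) < (x + x⁻¹) ^ 2 := by
    have : 0 < x⁻¹ := inv_pos.mpr hx
    positivity
  have hb := std_tail_bound hμ (-x⁻¹) ((x + x⁻¹) ^ 2) hK (Ioi x) measurableSet_Ioi ?_
  · have heq : ((-x⁻¹) ^ 2 + 1) / (x + x⁻¹) ^ 2 = 1 / (1 + x ^ 2) := by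
      have h1 : (1:ℝ) + x ^ 2 > 0 := by positivity
      rw [div_eq_div_iff hK.ne' h1.ne']
      field_simp
      ring
    rw [heq] at hb
    have hcompl : μ (Iic x) = 1 - μ (Ioi x) := by
      rw [← Set.compl_Ioi]
      rw [measure_compl measurableSet_Ioi (measure_ne_top μ _), measure_univ]
    have hle : μ (Ioi x) ≤ 1 := prob_le_one
    unfold distFun
    rw [hcompl, ENNReal.toReal_sub_of_le hle (by simp)]
    simp only [ENNReal.toReal_one]
    linarith
  · intro y hy
    simp only [mem_Ioi] at hy
    have h2 : (0:ℝ) < x⁻¹ := inv_pos.mpr hx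
    nlinarith

lemma std_B_mem {μ : Measure ℝ} (hμ : μ ∈ stdMeasures) {α : ℝ} (hα : α ∈ Ioo (0:ℝ) 1) :
    α ≤ distFun μ (Real.sqrt (α / (1 - α))) := by
  obtain ⟨hα0, hα1⟩ := hα
  have h1α : (0:ℝ) < 1 - α := by linarith
  have hBpos : 0 < Real.sqrt (α / (1 - α)) := Real.sqrt_pos.mpr (by positivity)
  have hB2 : Real.sqrt (α / (1 - α)) ^ 2 = α / (1 - α) := Real.sq_sqrt (by positivity)
  have h := cantelli_right hμ hBpos
  have heq : 1 - 1 / (1 + Real.sqrt (α / (1 - α)) ^ 2) = α := by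
    rw [hB2]
    field_simp
    ring
  linarith

lemma std_lb {μ : Measure ℝ} (hμ : μ ∈ stdMeasures) {α : ℝ} (hα : α ∈ Ioo (0:ℝ) 1) :
    ∀ z ∈ {x : ℝ | α ≤ distFun μ x}, -Real.sqrt ((1 - α) / α) ≤ z := by
  obtain ⟨hα0, hα1⟩ := hα
  have h1α : (0:ℝ) < 1 - α := by linarith
  intro z hz
  simp only [mem_setOf_eq] at hz
  by_contra hcon
  push_neg at hcon
  have hApos : 0 < Real.sqrt ((1 - α) / α) := Real.sqrt_pos.mpr (by positivity)
  have hA2 : Real.sqrt ((1 - α) / α) ^ 2 = (1 - α) / α := Real.sq_sqrt (by positivity)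
  have hzneg : z < 0 := by linarith
  have h := cantelli_left hμ hzneg
  have hz2 : z ^ 2 > (1 - α) / α := by nlinarith [Real.sqrt_nonneg ((1 - α) / α)]
  have h2 : 1 / (1 + z ^ 2) < α := by
    have h5 : α * ((1 - α) / α) = 1 - α := by field_simp
    have h6 : α * ((1 - α) / α) < α * z ^ 2 := (mul_lt_mul_iff_right₀ hα0).mpr hz2
    rw [div_lt_iff₀ (by positivity : (0:ℝ) < 1 + z ^ 2)]
    nlinarith
  linarith

lemma std_q_bounds {μ : Measure ℝ} (hμ : μ ∈ stdMeasures) {α : ℝ} (hα : α ∈ Ioo (0:ℝ) 1) :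
    -Real.sqrt ((1 - α) / α) ≤ lowerQuantile μ α ∧
      lowerQuantile μ α ≤ Real.sqrt (α / (1 - α)) := by
  have hne : {x : ℝ | α ≤ distFun μ x}.Nonempty := ⟨_, std_B_mem hμ hα⟩
  have hbdd : BddBelow {x : ℝ | α ≤ distFun μ x} := ⟨_, std_lb hμ hα⟩
  exact ⟨le_csInf hne (std_lb hμ hα), csInf_le hbdd (std_B_mem hμ hα)⟩

noncomputable def tp (p a b : ℝ) : Measure ℝ :=
  ENNReal.ofReal p • Measure.dirac a + ENNReal.ofReal (1 - p) • Measure.dirac b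

lemma tp_prob {p a b : ℝ} (hp0 : 0 ≤ p) (hp1 : p ≤ 1) :
    IsProbabilityMeasure (tp p a b) := by
  constructor
  simp only [tp, Measure.add_apply, Measure.smul_apply, smul_eq_mul,
    Measure.dirac_apply, Set.indicator_of_mem (mem_univ _), Pi.one_apply, mul_one]
  rw [← ENNReal.ofReal_add hp0 (by linarith)]
  norm_num

lemma tp_integral {p a b : ℝ} (hp0 : 0 ≤ p) (hp1 : p ≤ 1) (f : ℝ → ℝ)
    (_hf : Measurable f) :
    ∫ x, f x ∂(tp p a b) = p * f a + (1 - p) * f b := by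
  have hia : Integrable f (Measure.dirac a) :=
    (integrable_const (f a)).congr (ae_eq_dirac f).symm
  have hib : Integrable f (Measure.dirac b) :=
    (integrable_const (f b)).congr (ae_eq_dirac f).symm
  rw [tp, integral_add_measure (hia.smul_measure ENNReal.ofReal_ne_top)
      (hib.smul_measure ENNReal.ofReal_ne_top),
    integral_smul_measure, integral_smul_measure, integral_dirac, integral_dirac,
    ENNReal.toReal_ofReal hp0, ENNReal.toReal_ofReal (by linarith : (0:ℝ) ≤ 1 - p)]
  simp [smul_eq_mul]

lemma tp_distFun {p a b : ℝ} (hp0 : 0 ≤ p) (hp1 : p ≤ 1) (x : ℝ) :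
    distFun (tp p a b) x =
      (if a ≤ x then p else 0) + (if b ≤ x then 1 - p else 0) := by
  unfold distFun tp
  rw [Measure.add_apply, Measure.smul_apply, Measure.smul_apply,
    Measure.dirac_apply' _ measurableSet_Iic, Measure.dirac_apply' _ measurableSet_Iic,
    ENNReal.toReal_add (by simp [Set.indicator]; split_ifs <;> simp)
      (by simp [Set.indicator]; split_ifs <;> simp)]
  simp only [smul_eq_mul, Set.indicator, mem_Iic, Pi.one_apply]
  split_ifs <;> simp [ENNReal.toReal_ofReal, hp0, (by linarith : (0:ℝ) ≤ 1 - p)]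

lemma tp_quantile_ge {p a b α : ℝ} (hα0 : 0 < α) (hαp : α ≤ p) (hp1 : p ≤ 1)
    (hab : a < b) : lowerQuantile (tp p a b) α = a := by
  have hp0 : 0 ≤ p := le_trans hα0.le hαp
  have hset : {x : ℝ | α ≤ distFun (tp p a b) x} = Ici a := by
    ext x
    simp only [mem_setOf_eq, mem_Ici, tp_distFun hp0 hp1]
    constructor
    · intro h
      by_contra hc
      push_neg at hc
      rw [if_neg (by linarith), if_neg (by linarith)] at h
      linarith
    · intro h
      rw [if_pos h]
      split_ifs <;> linarith
  rw [lowerQuantile, hset, csInf_Ici]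

lemma tp_quantile_lt {p a b α : ℝ} (hα0 : 0 < α) (hpα : p < α) (hα1 : α ≤ 1)
    (hp0 : 0 ≤ p) (hab : a < b) : lowerQuantile (tp p a b) α = b := by
  have hp1 : p ≤ 1 := by linarith
  have hset : {x : ℝ | α ≤ distFun (tp p a b) x} = Ici b := by
    ext x
    simp only [mem_setOf_eq, mem_Ici, tp_distFun hp0 hp1]
    constructor
    · intro h
      by_contra hc
      push_neg at hc
      split_ifs at h <;> linarith
    · intro h
      rw [if_pos h, if_pos (by linarith)]
      linarith
  rw [lowerQuantile, hset, csInf_Ici]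

lemma stdtp_mem {β : ℝ} (hβ0 : 0 < β) (hβ1 : β < 1) :
    tp β (-Real.sqrt ((1 - β) / β)) (Real.sqrt (β / (1 - β))) ∈ stdMeasures := by
  have h1β : (0:ℝ) < 1 - β := by linarith
  have key1 : β * Real.sqrt ((1 - β) / β) = Real.sqrt (β * (1 - β)) := by
    have h1 : β * (1 - β) = β ^ 2 * ((1 - β) / β) := by field_simp
    rw [h1, Real.sqrt_mul (sq_nonneg β), Real.sqrt_sq hβ0.le]
  have key2 : (1 - β) * Real.sqrt (β / (1 - β)) = Real.sqrt (β * (1 - β)) := by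
    have h1 : β * (1 - β) = (1 - β) ^ 2 * (β / (1 - β)) := by field_simp
    rw [h1, Real.sqrt_mul (sq_nonneg (1 - β)), Real.sqrt_sq h1β.le]
  refine ⟨tp_prob hβ0.le hβ1.le, ?_, ?_⟩
  · rw [tp_integral hβ0.le hβ1.le (fun x => x) measurable_id, mul_neg]
    linarith
  · rw [tp_integral hβ0.le hβ1.le (fun x => x ^ 2) (measurable_id.pow_const 2), neg_pow,
      Real.sq_sqrt (by positivity : (0:ℝ) ≤ (1 - β) / β),
      Real.sq_sqrt (by positivity : (0:ℝ) ≤ β / (1 - β))]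
    field_simp
    ring

lemma stdtp_VaR_eq {α : ℝ} (hα : α ∈ Ioo (0:ℝ) 1) :
    VaR (tp α (-Real.sqrt ((1 - α) / α)) (Real.sqrt (α / (1 - α)))) α =
      Real.sqrt ((1 - α) / α) := by
  obtain ⟨hα0, hα1⟩ := hα
  have h1α : (0:ℝ) < 1 - α := by linarith
  rw [VaR, tp_quantile_ge hα0 le_rfl hα1.le
    (by
      have h1 : 0 < Real.sqrt ((1 - α) / α) := Real.sqrt_pos.mpr (by positivity)
      have h2 : 0 < Real.sqrt (α / (1 - α)) := Real.sqrt_pos.mpr (by positivity)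
      linarith), neg_neg]

lemma stdtp_VaR_lt {α β : ℝ} (hα : α ∈ Ioo (0:ℝ) 1) (hβ0 : 0 < β) (hβα : β < α) :
    VaR (tp β (-Real.sqrt ((1 - β) / β)) (Real.sqrt (β / (1 - β)))) α =
      -Real.sqrt (β / (1 - β)) := by
  obtain ⟨hα0, hα1⟩ := hα
  have h1β : (0:ℝ) < 1 - β := by linarith
  rw [VaR, tp_quantile_lt hα0 hβα hα1.le hβ0.le
    (by
      have h1 : 0 < Real.sqrt ((1 - β) / β) := Real.sqrt_pos.mpr (by positivity)
      have h2 : 0 < Real.sqrt (β / (1 - β)) := Real.sqrt_pos.mpr (by positivity)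
      linarith)]

lemma VaR_sSup {α : ℝ} (hα : α ∈ Ioo (0:ℝ) 1) :
    sSup ((fun μ : Measure ℝ => VaR μ α) '' stdMeasures) = Real.sqrt ((1 - α) / α) := by
  obtain ⟨hα0, hα1⟩ := hα
  have hub : ∀ v ∈ (fun μ : Measure ℝ => VaR μ α) '' stdMeasures,
      v ≤ Real.sqrt ((1 - α) / α) := by
    rintro v ⟨μ, hμ, rfl⟩
    have := (std_q_bounds hμ ⟨hα0, hα1⟩).1
    simp only [VaR]
    linarith
  have hmem : Real.sqrt ((1 - α) / α) ∈ (fun μ : Measure ℝ => VaR μ α) '' stdMeasures :=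
    ⟨_, stdtp_mem hα0 hα1, stdtp_VaR_eq ⟨hα0, hα1⟩⟩
  exact le_antisymm (csSup_le ⟨_, hmem⟩ hub) (le_csSup ⟨_, hub⟩ hmem)

lemma VaR_sInf {α : ℝ} (hα : α ∈ Ioo (0:ℝ) 1) :
    sInf ((fun μ : Measure ℝ => VaR μ α) '' stdMeasures) = -Real.sqrt (α / (1 - α)) := by
  obtain ⟨hα0, hα1⟩ := hα
  have h1α : (0:ℝ) < 1 - α := by linarith
  set B := Real.sqrt (α / (1 - α)) with hBdef
  have hBpos : 0 < B := Real.sqrt_pos.mpr (by positivity)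
  have hB2 : B ^ 2 = α / (1 - α) := Real.sq_sqrt (by positivity)
  have hlb : ∀ v ∈ (fun μ : Measure ℝ => VaR μ α) '' stdMeasures, -B ≤ v := by
    rintro v ⟨μ, hμ, rfl⟩
    have := (std_q_bounds hμ ⟨hα0, hα1⟩).2
    simp only [VaR]
    linarith
  have hne : ((fun μ : Measure ℝ => VaR μ α) '' stdMeasures).Nonempty :=
    ⟨_, _, stdtp_mem hα0 hα1, rfl⟩
  refine le_antisymm ?_ (le_csInf hne hlb)
  refine le_of_forall_pos_le_add fun ε hε => ?_
  set t := max (B - ε) 0 with htdef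
  have ht0 : 0 ≤ t := le_max_right _ _
  have htB : t < B := by
    rw [htdef, max_lt_iff]
    constructor <;> linarith
  have htBε : B - ε ≤ t := le_max_left _ _
  have ht2 : t ^ 2 < α / (1 - α) := by
    rw [← hB2]
    nlinarith
  set g := t ^ 2 / (1 + t ^ 2) with hgdef
  have hg0 : 0 ≤ g := by positivity
  have hgα : g < α := by
    rw [hgdef, div_lt_iff₀ (by positivity)]
    rw [lt_div_iff₀ h1α] at ht2
    nlinarith
  set β := (g + α) / 2 with hβdef
  have hβ0 : 0 < β := by rw [hβdef]; linarith
  have hβα : β < α := by rw [hβdef]; linarith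
  have hgβ : g < β := by rw [hβdef]; linarith
  have hβ1 : β < 1 := by linarith
  have h1β : (0:ℝ) < 1 - β := by linarith
  have hq : t ≤ Real.sqrt (β / (1 - β)) := by
    rw [show t = Real.sqrt (t ^ 2) from (Real.sqrt_sq ht0).symm]
    apply Real.sqrt_le_sqrt
    have hgβ' : t ^ 2 < β * (1 + t ^ 2) := by
      rw [hgdef, div_lt_iff₀ (by positivity : (0:ℝ) < 1 + t ^ 2)] at hgβ
      linarith
    rw [le_div_iff₀ h1β]
    nlinarith
  have hmem : -Real.sqrt (β / (1 - β)) ∈ (fun μ : Measure ℝ => VaR μ α) '' stdMeasures :=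
    ⟨_, stdtp_mem hβ0 hβ1, stdtp_VaR_lt ⟨hα0, hα1⟩ hβ0 hβα⟩
  calc sInf ((fun μ : Measure ℝ => VaR μ α) '' stdMeasures)
      ≤ -Real.sqrt (β / (1 - β)) := csInf_le ⟨_, hlb⟩ hmem
    _ ≤ -t := by linarith
    _ ≤ -B + ε := by linarith

/-- The relative measure of model risk for `VaR_α` at `μ₀` over the class of
standard probability measures:
`RM(μ₀) = (√((1-α)/α) − VaR_α(μ₀)) / (√((1-α)/α) + √(α/(1-α)))
        = (1-α) − √(α(1-α))·VaR_α(μ₀)`. -/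
theorem relative_measure_VaR_std (α : ℝ) (hα : α ∈ Ioo (0 : ℝ) 1)
    (μ₀ : Measure ℝ) (hμ₀ : μ₀ ∈ stdMeasures) :
    (sSup ((fun μ : Measure ℝ => VaR μ α) '' stdMeasures) - VaR μ₀ α) /
        (sSup ((fun μ : Measure ℝ => VaR μ α) '' stdMeasures) -
          sInf ((fun μ : Measure ℝ => VaR μ α) '' stdMeasures)) =
      (Real.sqrt ((1 - α) / α) - VaR μ₀ α) /
        (Real.sqrt ((1 - α) / α) + Real.sqrt (α / (1 - α))) ∧
    (sSup ((fun μ : Measure ℝ => VaR μ α) '' stdMeasures) - VaR μ₀ α) /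
        (sSup ((fun μ : Measure ℝ => VaR μ α) '' stdMeasures) -
          sInf ((fun μ : Measure ℝ => VaR μ α) '' stdMeasures)) =
      (1 - α) - Real.sqrt (α * (1 - α)) * VaR μ₀ α := by
  obtain ⟨hα0, hα1⟩ := hα
  have h1α : (0:ℝ) < 1 - α := by linarith
  rw [VaR_sSup ⟨hα0, hα1⟩, VaR_sInf ⟨hα0, hα1⟩, sub_neg_eq_add]
  refine ⟨rfl, ?_⟩
  set v := VaR μ₀ α with hv
  set s := Real.sqrt (α * (1 - α)) with hsdef
  have hs : 0 < s := Real.sqrt_pos.mpr (by positivity)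
  have hs2 : s ^ 2 = α * (1 - α) := Real.sq_sqrt (by positivity)
  have hA : Real.sqrt ((1 - α) / α) = s / α := by
    rw [show (1 - α) / α = (α * (1 - α)) / α ^ 2 by field_simp,
      Real.sqrt_div (by positivity), Real.sqrt_sq hα0.le]
  have hB : Real.sqrt (α / (1 - α)) = s / (1 - α) := by
    rw [show α / (1 - α) = (α * (1 - α)) / (1 - α) ^ 2 by field_simp,
      Real.sqrt_div (by positivity), Real.sqrt_sq h1α.le]
  rw [hA, hB]
  have hden : s / α + s / (1 - α) ≠ 0 := by positivity
  rw [div_eq_iff hden]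
  field_simp
  linear_combination v * hs2
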